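/- Let J_n ∈ ℝ^{n×n} denote the exchange matrix (ones on the anti-diagonal, zeros elsewhere). Let A ∈ ℂ^{n×n} be centrosymmetric, i.e., A J_n = J_n A, with Moore–Penrose pseudoinverse A†, and let S ⊆ {1,…,n}×{1,…,n} be a sparsity pattern invariant under the map (i,j) ↦ (n+1−i, n+1−j). If X ∈ F(A,S) satisfies J(X;A) ≤ J(Y;A) for all Y ∈ F(A,S) (i.e., X is a minimizer of the sparsification problem), then X is centrosymmetric: X J_n = J_n X. -/

import Mathlib

open scoped Matrix

/-- `B` is the Moore–Penrose pseudoinverse of `A`. -/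
def IsMPInv {m n : ℕ} (A : Matrix (Fin m) (Fin n) ℂ) (B : Matrix (Fin n) (Fin m) ℂ) : Prop :=
  A * B * A = A ∧ B * A * B = B ∧ (A * B)ᴴ = A * B ∧ (B * A)ᴴ = B * A

/-- Squared Frobenius norm. -/
noncomputable def frobSq {m n : ℕ} (M : Matrix (Fin m) (Fin n) ℂ) : ℝ :=
  ∑ i, ∑ j, ‖M i j‖ ^ 2

/-- The misfit functional `J(X;A) = ½‖(X-A)A†‖_F² + ½‖A†(X-A)‖_F²`,
with the pseudoinverse `Ad` of `A` given explicitly. -/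
noncomputable def Jmis {m n : ℕ} (X A : Matrix (Fin m) (Fin n) ℂ)
    (Ad : Matrix (Fin n) (Fin m) ℂ) : ℝ :=
  (1 / 2) * frobSq ((X - A) * Ad) + (1 / 2) * frobSq (Ad * (X - A))

/-- The feasible set `F(A,S)`: the null space of `A` is contained in that of `X`,
the null space of `A*` in that of `X*`, and `X` vanishes outside the pattern `S`. -/
def Feasible {m n : ℕ} (A X : Matrix (Fin m) (Fin n) ℂ) (S : Set (Fin m × Fin n)) : Prop :=
  (∀ v : Fin n → ℂ, A.mulVec v = 0 → X.mulVec v = 0) ∧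
  (∀ v : Fin m → ℂ, Aᴴ.mulVec v = 0 → Xᴴ.mulVec v = 0) ∧
  (∀ ij : Fin m × Fin n, ij ∉ S → X ij.1 ij.2 = 0)

/-- The exchange matrix `J_n`: ones on the anti-diagonal, zeros elsewhere. -/
def exchangeMatrix (n : ℕ) : Matrix (Fin n) (Fin n) ℂ :=
  Matrix.of fun i j => if j = i.rev then 1 else 0

/- ### Auxiliary lemmas -/

lemma rev_cond {n : ℕ} (j x : Fin n) : j = x.rev ↔ x = j.rev := by
  constructor <;> intro h <;> simp [h]

lemma exJ_mul_self (n : ℕ) : exchangeMatrix n * exchangeMatrix n = 1 := by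
  ext i j
  simp [exchangeMatrix, Matrix.mul_apply, Matrix.one_apply, rev_cond j, Finset.sum_ite_eq',
    rev_cond j i, eq_comm]

lemma exJ_conjT (n : ℕ) : (exchangeMatrix n)ᴴ = exchangeMatrix n := by
  ext i j
  simp [exchangeMatrix, Matrix.conjTranspose_apply, rev_cond]

lemma JMJ_apply {n : ℕ} (M : Matrix (Fin n) (Fin n) ℂ) (i j : Fin n) :
    (exchangeMatrix n * M * exchangeMatrix n) i j = M i.rev j.rev := by
  simp [exchangeMatrix, Matrix.mul_apply, Finset.sum_ite_eq, rev_cond j,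
    Finset.mul_sum, Finset.sum_ite_eq']

lemma conjJ_mul {n : ℕ} (M N : Matrix (Fin n) (Fin n) ℂ) :
    (exchangeMatrix n * M * exchangeMatrix n) * (exchangeMatrix n * N * exchangeMatrix n)
      = exchangeMatrix n * (M * N) * exchangeMatrix n := by
  have h : (exchangeMatrix n * M * exchangeMatrix n) * (exchangeMatrix n * N * exchangeMatrix n)
      = exchangeMatrix n * (M * ((exchangeMatrix n * exchangeMatrix n) * (N * exchangeMatrix n))) := by
    simp only [Matrix.mul_assoc]
  rw [h, exJ_mul_self, Matrix.one_mul]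
  simp only [Matrix.mul_assoc]

lemma conjJ_conjT {n : ℕ} (M : Matrix (Fin n) (Fin n) ℂ) :
    (exchangeMatrix n * M * exchangeMatrix n)ᴴ = exchangeMatrix n * Mᴴ * exchangeMatrix n := by
  simp only [Matrix.conjTranspose_mul, exJ_conjT, Matrix.mul_assoc]

lemma mp_unique {m n : ℕ} (A : Matrix (Fin m) (Fin n) ℂ) (B C : Matrix (Fin n) (Fin m) ℂ)
    (hB : IsMPInv A B) (hC : IsMPInv A C) : B = C := by
  obtain ⟨hB1, hB2, hB3, hB4⟩ := hB
  obtain ⟨hC1, hC2, hC3, hC4⟩ := hC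
  have hab : A * B = A * C := by
    calc A * B = (A * C) * (A * B) := by
          conv_lhs => rw [← hC1]
          simp only [Matrix.mul_assoc]
      _ = (A * C)ᴴ * (A * B)ᴴ := by rw [hC3, hB3]
      _ = ((A * B) * (A * C))ᴴ := by rw [← Matrix.conjTranspose_mul]
      _ = (A * C)ᴴ := by
          rw [show A * B * (A * C) = (A * B * A) * C by simp only [Matrix.mul_assoc], hB1]
      _ = A * C := hC3
  have hba : B * A = C * A := by
    calc B * A = (B * A) * (C * A) := by
          conv_lhs => rw [show B * A = B * (A*C*A) by rw [hC1]]
          simp only [Matrix.mul_assoc]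
      _ = (B * A)ᴴ * (C * A)ᴴ := by rw [hC4, hB4]
      _ = ((C * A) * (B * A))ᴴ := by rw [← Matrix.conjTranspose_mul]
      _ = (C * A)ᴴ := by
          rw [show C * A * (B * A) = C * (A * B * A) by simp only [Matrix.mul_assoc], hB1]
      _ = C * A := hC4
  calc B = B * A * B := hB2.symm
    _ = C * A * B := by rw [hba]
    _ = C * (A * B) := by rw [Matrix.mul_assoc]
    _ = C * (A * C) := by rw [hab]
    _ = C := by rw [← Matrix.mul_assoc, hC2]

lemma frobSq_nonneg {m n : ℕ} (M : Matrix (Fin m) (Fin n) ℂ) : 0 ≤ frobSq M := by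
  apply Finset.sum_nonneg; intro i _; apply Finset.sum_nonneg; intro j _; positivity

lemma frobSq_eq_zero {m n : ℕ} {M : Matrix (Fin m) (Fin n) ℂ} (h : frobSq M = 0) : M = 0 := by
  ext i j
  have h1 := (Finset.sum_eq_zero_iff_of_nonneg (fun i _ => Finset.sum_nonneg
    (fun j _ => by positivity))).mp h i (Finset.mem_univ i)
  have h2 := (Finset.sum_eq_zero_iff_of_nonneg (fun j _ => by positivity)).mp h1 j
    (Finset.mem_univ j)
  simpa using h2

lemma frobSq_parallel {m n : ℕ} (P Q : Matrix (Fin m) (Fin n) ℂ) :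
    frobSq ((2⁻¹ : ℂ) • (P + Q)) + frobSq ((2⁻¹ : ℂ) • (P - Q))
      = (1/2) * frobSq P + (1/2) * frobSq Q := by
  have key : ∀ a b : ℂ, ‖(2⁻¹ : ℂ) * (a + b)‖ ^ 2 + ‖(2⁻¹ : ℂ) * (a - b)‖ ^ 2
      = (1/2) * ‖a‖ ^ 2 + (1/2) * ‖b‖ ^ 2 := by
    intro a b
    simp only [Complex.sq_norm, Complex.normSq_mul,
      Complex.normSq_apply, Complex.add_re, Complex.add_im, Complex.sub_re, Complex.sub_im]
    norm_num [Complex.inv_re, Complex.inv_im, Complex.normSq_apply]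
    ring
  simp only [frobSq, Matrix.smul_apply, Matrix.add_apply, Matrix.sub_apply, smul_eq_mul,
    Finset.mul_sum, ← Finset.sum_add_distrib]
  exact Finset.sum_congr rfl fun i _ => Finset.sum_congr rfl fun j _ => key _ _

lemma frobSq_conjJ {n : ℕ} (M : Matrix (Fin n) (Fin n) ℂ) :
    frobSq (exchangeMatrix n * M * exchangeMatrix n) = frobSq M := by
  simp only [frobSq, JMJ_apply]
  apply Fintype.sum_equiv (Fin.revPerm)
  intro i
  apply Fintype.sum_equiv (Fin.revPerm)
  intro j
  rfl

/-- if `A` is centrosymmetric (`A Jₙ = Jₙ A`), the pattern `S` is invariant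
under `(i,j) ↦ (n+1-i, n+1-j)`, and `X` minimizes the misfit over `F(A,S)`, then `X` is
centrosymmetric. -/
theorem stmt19 {n : ℕ} (A X Ad : Matrix (Fin n) (Fin n) ℂ)
    (hA : A * exchangeMatrix n = exchangeMatrix n * A) (hMP : IsMPInv A Ad)
    (S : Set (Fin n × Fin n))
    (hS : ∀ i j : Fin n, (i, j) ∈ S ↔ (i.rev, j.rev) ∈ S)
    (hXfeas : Feasible A X S)
    (hXmin : ∀ Y, Feasible A Y S → Jmis X A Ad ≤ Jmis Y A Ad) :
    X * exchangeMatrix n = exchangeMatrix n * X := by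
  set J := exchangeMatrix n with hJdef
  have hJJ : J * J = 1 := exJ_mul_self n
  have hJH : Jᴴ = J := exJ_conjT n
  have hconjmul : ∀ M N : Matrix (Fin n) (Fin n) ℂ,
      (J * M * J) * (J * N * J) = J * (M * N) * J := fun M N => conjJ_mul M N
  have hconjT : ∀ M : Matrix (Fin n) (Fin n) ℂ,
      (J * M * J)ᴴ = J * Mᴴ * J := fun M => conjJ_conjT M
  -- A is conjugation-invariant
  have hJAJ : J * A * J = A := by
    rw [← hA, Matrix.mul_assoc, hJJ, Matrix.mul_one]
  have hAA : A = J * A * J := hJAJ.symm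
  -- the pseudoinverse commutes with J
  have hMPJ : IsMPInv A (J * Ad * J) := by
    obtain ⟨h1, h2, h3, h4⟩ := hMP
    refine ⟨?_, ?_, ?_, ?_⟩
    · rw [hAA, hconjmul, hconjmul, h1]
    · rw [hAA, hconjmul, hconjmul, h2]
    · rw [hAA, hconjmul, hconjT, h3]
    · rw [hAA, hconjmul, hconjT, h4]
  have hAdc : J * Ad * J = Ad := mp_unique A _ Ad hMPJ hMP
  have hAdJ : Ad * J = J * Ad := by
    conv_lhs => rw [← hAdc]
    rw [Matrix.mul_assoc (J * Ad) J J, hJJ, Matrix.mul_one]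
  -- conjugated candidate
  set Xt := J * X * J with hXtdef
  have hAHJ : Aᴴ * J = J * Aᴴ := by
    have := congrArg Matrix.conjTranspose hA
    simp only [Matrix.conjTranspose_mul, hJH] at this
    exact this.symm
  have hXtfeas : Feasible A Xt S := by
    refine ⟨?_, ?_, ?_⟩
    · intro v hv
      have h1 : A.mulVec (J.mulVec v) = 0 := by
        rw [Matrix.mulVec_mulVec, hA, ← Matrix.mulVec_mulVec, hv, Matrix.mulVec_zero]
      have h2 : X.mulVec (J.mulVec v) = 0 := hXfeas.1 _ h1
      show (J * X * J).mulVec v = 0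
      rw [Matrix.mul_assoc, ← Matrix.mulVec_mulVec, ← Matrix.mulVec_mulVec, h2,
        Matrix.mulVec_zero]
    · intro v hv
      have hXtH : Xtᴴ = J * Xᴴ * J := conjJ_conjT X
      have h1 : Aᴴ.mulVec (J.mulVec v) = 0 := by
        rw [Matrix.mulVec_mulVec, hAHJ, ← Matrix.mulVec_mulVec, hv, Matrix.mulVec_zero]
      have h2 : Xᴴ.mulVec (J.mulVec v) = 0 := hXfeas.2.1 _ h1
      rw [hXtH, Matrix.mul_assoc, ← Matrix.mulVec_mulVec, ← Matrix.mulVec_mulVec, h2,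
        Matrix.mulVec_zero]
    · intro ij hij
      show (J * X * J) ij.1 ij.2 = 0
      rw [JMJ_apply]
      refine hXfeas.2.2 (ij.1.rev, ij.2.rev) ?_
      intro hmem
      exact hij ((hS ij.1 ij.2).mpr hmem)
  -- key matrix identities
  have hXtsub : Xt - A = J * (X - A) * J := by
    rw [Matrix.mul_sub, Matrix.sub_mul, hXtdef, hJAJ]
  have hP' : (Xt - A) * Ad = J * ((X - A) * Ad) * J := by
    calc (Xt - A) * Ad = (J * (X - A) * J) * (J * Ad * J) := by rw [hXtsub, hAdc]
      _ = J * ((X - A) * Ad) * J := hconjmul _ _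
  have hQ' : Ad * (Xt - A) = J * (Ad * (X - A)) * J := by
    calc Ad * (Xt - A) = (J * Ad * J) * (J * (X - A) * J) := by rw [hXtsub, hAdc]
      _ = J * (Ad * (X - A)) * J := hconjmul _ _
  -- midpoint candidate
  set Y : Matrix (Fin n) (Fin n) ℂ := (2⁻¹ : ℂ) • (X + Xt) with hYdef
  have hYfeas : Feasible A Y S := by
    refine ⟨?_, ?_, ?_⟩
    · intro v hv
      rw [hYdef, Matrix.smul_mulVec, Matrix.add_mulVec, hXfeas.1 v hv, hXtfeas.1 v hv,
        add_zero, smul_zero]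
    · intro v hv
      rw [hYdef, Matrix.conjTranspose_smul, Matrix.conjTranspose_add,
        Matrix.smul_mulVec, Matrix.add_mulVec, hXfeas.2.1 v hv, hXtfeas.2.1 v hv,
        add_zero, smul_zero]
    · intro ij hij
      rw [hYdef]
      simp [hXfeas.2.2 ij hij, hXtfeas.2.2 ij hij]
  -- abbreviations
  set P := (X - A) * Ad with hPdef
  set Q := Ad * (X - A) with hQdef
  have hfP' : frobSq ((Xt - A) * Ad) = frobSq P := by rw [hP', frobSq_conjJ]
  have hfQ' : frobSq (Ad * (Xt - A)) = frobSq Q := by rw [hQ', frobSq_conjJ]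
  have hYsub : Y - A = (2⁻¹ : ℂ) • ((X - A) + (Xt - A)) := by
    ext i j
    simp only [Matrix.sub_apply, Matrix.add_apply, Matrix.smul_apply, smul_eq_mul, hYdef]
    ring
  have hYP : (Y - A) * Ad = (2⁻¹ : ℂ) • (P + (Xt - A) * Ad) := by
    rw [hYsub, Matrix.smul_mul, Matrix.add_mul]
  have hYQ : Ad * (Y - A) = (2⁻¹ : ℂ) • (Q + Ad * (Xt - A)) := by
    rw [hYsub, Matrix.mul_smul, Matrix.mul_add]
  -- the minimality argument
  have hmin := hXmin Y hYfeas
  have e1 := frobSq_parallel P ((Xt - A) * Ad)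
  have e2 := frobSq_parallel Q (Ad * (Xt - A))
  have n1 := frobSq_nonneg ((2⁻¹ : ℂ) • (P - (Xt - A) * Ad))
  have n2 := frobSq_nonneg ((2⁻¹ : ℂ) • (Q - Ad * (Xt - A)))
  rw [Jmis, Jmis, hYP, hYQ, ← hPdef, ← hQdef] at hmin
  rw [hfP'] at e1
  rw [hfQ'] at e2
  have hz1 : frobSq ((2⁻¹ : ℂ) • (P - (Xt - A) * Ad)) = 0 := by linarith
  have hPP' : P = (Xt - A) * Ad := by
    have h0 := frobSq_eq_zero hz1
    have h2 : P - (Xt - A) * Ad = 0 := by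
      rcases smul_eq_zero.mp h0 with h | h
      · exact absurd h (by norm_num)
      · exact h
    exact sub_eq_zero.mp h2
  -- deduce (X - Xt) * Ad = 0
  set D := X - Xt with hDdef
  have hDAd : D * Ad = 0 := by
    have : D * Ad = P - (Xt - A) * Ad := by
      rw [hPdef, ← Matrix.sub_mul, hDdef]
      congr 1
      ext i j
      simp only [Matrix.sub_apply]
      ring
    rw [this, hPP', sub_self]
  have hDnull : ∀ v : Fin n → ℂ, A.mulVec v = 0 → D.mulVec v = 0 := by
    intro v hv
    rw [hDdef, Matrix.sub_mulVec, hXfeas.1 v hv, hXtfeas.1 v hv, sub_self]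
  -- D vanishes on range of Ad*A and on its complement
  have hD1 : D * (Ad * A) = 0 := by rw [← Matrix.mul_assoc, hDAd, Matrix.zero_mul]
  have hD2 : D * (1 - Ad * A) = 0 := by
    have hAC : A * (1 - Ad * A) = 0 := by
      rw [Matrix.mul_sub, Matrix.mul_one, ← Matrix.mul_assoc, hMP.1, sub_self]
    ext i j
    have hcol : A.mulVec (fun k => (1 - Ad * A) k j) = 0 := by
      funext l
      have := congrFun (congrFun hAC l) j
      simpa [Matrix.mul_apply, Matrix.mulVec, dotProduct] using this
    have hDcol := hDnull _ hcol
    have : (D * (1 - Ad * A)) i j = D.mulVec (fun k => (1 - Ad * A) k j) i := by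
      simp [Matrix.mul_apply, Matrix.mulVec, dotProduct]
    rw [this, hDcol]
    rfl
  have hD : D = 0 := by
    have : D = D * (Ad * A) + D * (1 - Ad * A) := by
      rw [← Matrix.mul_add]
      simp
    rw [this, hD1, hD2, add_zero]
  have hXXt : X = J * X * J := by
    have := sub_eq_zero.mp hD
    rw [hDdef] at hD
    exact sub_eq_zero.mp hD
  calc X * J = (J * X * J) * J := by rw [← hXXt]
    _ = J * X * (J * J) := by simp only [Matrix.mul_assoc]
    _ = J * X := by rw [hJJ, Matrix.mul_one]
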